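/- arXiv:1801.05135 — 3 statements merged into one kernel-verified Lean document; each statement's English description precedes it below -/
import Mathlib

section
/- Consider the T-periodic system ẋ(t) = A(t)x(t) + B(t)u(t) with act-and-wait delayed feedback u(t) = −g(t)F(x(t) − x(t−T)), where g(t) = 0 on [2kT, (2k+1)T) and g(t) = 1 on [(2k+1)T, 2(k+1)T). Then for all k ∈ ℕ, x(2(k+1)T) = Λ x(2kT), where Λ = Υ(T,0)Φ(T,0) + ∫_T^{2T} Υ(2T,s̄) B(s̄) F Φ(s̄−T, 0) ds̄, with Φ the state-transition matrix of ẋ = A(t)x and Υ the state-transition matrix of ẋ = (A(t)−B(t)F)x. -/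
attribute [local instance] Matrix.normedAddCommGroup Matrix.normedSpace

open scoped Real

open Set
open scoped NNReal


lemma hasDerivAt_mulVec {n p : ℕ} {M : ℝ → Matrix (Fin n) (Fin p) ℝ}
    {M' : Matrix (Fin n) (Fin p) ℝ} {v : ℝ → Fin p → ℝ} {v' : Fin p → ℝ} {t : ℝ}
    (hM : HasDerivAt M M' t) (hv : HasDerivAt v v' t) :
    HasDerivAt (fun τ => (M τ).mulVec (v τ)) (M'.mulVec (v t) + (M t).mulVec v') t := by
  rw [hasDerivAt_pi]
  intro i
  have hMij : ∀ j, HasDerivAt (fun τ => M τ i j) (M' i j) t := fun j =>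
    hasDerivAt_pi.1 (hasDerivAt_pi.1 hM i) j
  have hvj : ∀ j, HasDerivAt (fun τ => v τ j) (v' j) t := hasDerivAt_pi.1 hv
  have h : HasDerivAt (fun τ => ∑ j, M τ i j * v τ j)
      (∑ j, (M' i j * v t j + M t i j * v' j)) t :=
    HasDerivAt.fun_sum fun j _ => (hMij j).mul (hvj j)
  simpa [Matrix.mulVec, dotProduct, Finset.sum_add_distrib] using h

lemma norm_mulVec_le {n p : ℕ} (M : Matrix (Fin n) (Fin p) ℝ) (v : Fin p → ℝ) :
    ‖M.mulVec v‖ ≤ (p * ‖M‖) * ‖v‖ := by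
  have hnn : (0:ℝ) ≤ (p * ‖M‖) * ‖v‖ := by positivity
  rw [pi_norm_le_iff_of_nonneg hnn]
  intro i
  calc ‖M.mulVec v i‖ = |∑ j, M i j * v j| := by
        simp [Matrix.mulVec, dotProduct, Real.norm_eq_abs]
    _ ≤ ∑ j, |M i j * v j| := Finset.abs_sum_le_sum_abs _ _
    _ ≤ ∑ _j : Fin p, ‖M‖ * ‖v‖ := by
        refine Finset.sum_le_sum fun j _ => ?_
        rw [abs_mul]
        exact mul_le_mul (M.norm_entry_le_entrywise_sup_norm) (norm_le_pi_norm v j)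
          (abs_nonneg _) (norm_nonneg _)
    _ = (p * ‖M‖) * ‖v‖ := by simp [Finset.sum_const]; ring

lemma lip_aux {n : ℕ} {M : ℝ → Matrix (Fin n) (Fin n) ℝ} (hM : Continuous M)
    (a b : ℝ) (hab : a ≤ b) (c : ℝ → Fin n → ℝ) :
    ∃ K : ℝ≥0, ∀ τ : ℝ, LipschitzOnWith K
      (fun y => (M (max a (min τ b))).mulVec y + c (max a (min τ b))) univ := by
  obtain ⟨C, hC⟩ := (isCompact_Icc (a := a) (b := b)).exists_bound_of_continuousOn
    hM.continuousOn
  have hC0 : 0 ≤ C := le_trans (norm_nonneg _) (hC a ⟨le_refl a, hab⟩)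
  refine ⟨Real.toNNReal (n * C), fun τ => ?_⟩
  have hmem : max a (min τ b) ∈ Icc a b := ⟨le_max_left _ _, max_le hab (min_le_right _ _)⟩
  set q := max a (min τ b)
  have hlip : LipschitzWith (Real.toNNReal (n * C))
      (fun y : Fin n → ℝ => (M q).mulVec y + c q) := by
    refine LipschitzWith.of_dist_le_mul fun y z => ?_
    have heq : (M q).mulVec y + c q - ((M q).mulVec z + c q) = (M q).mulVec (y - z) := by
      rw [Matrix.mulVec_sub]; abel
    rw [dist_eq_norm, heq, dist_eq_norm]
    calc ‖(M q).mulVec (y - z)‖ ≤ (n * ‖M q‖) * ‖y - z‖ := norm_mulVec_le _ _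
      _ ≤ (n * C) * ‖y - z‖ := by
          have hMC := hC q hmem
          gcongr
      _ = (Real.toNNReal (n * C) : ℝ) * ‖y - z‖ := by
          rw [Real.coe_toNNReal _ (by positivity)]
  exact fun y _ z _ => hlip y z

/-- `fun v => M.mulVec v` as a continuous linear map. -/
noncomputable def mulVecCLM {n p : ℕ} (M : Matrix (Fin n) (Fin p) ℝ) :
    (Fin p → ℝ) →L[ℝ] (Fin n → ℝ) :=
  LinearMap.toContinuousLinearMap (Matrix.mulVecLin M)

@[simp] lemma mulVecCLM_apply {n p : ℕ} (M : Matrix (Fin n) (Fin p) ℝ) (v : Fin p → ℝ) :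
    mulVecCLM M v = M.mulVec v := rfl

lemma linODE_rep {n : ℕ} {M : ℝ → Matrix (Fin n) (Fin n) ℝ} (hM : Continuous M)
    {Ψ : ℝ → ℝ → Matrix (Fin n) (Fin n) ℝ}
    (hΨcont : Continuous fun p : ℝ × ℝ => Ψ p.1 p.2)
    (hinit : ∀ s, Ψ s s = 1)
    (hode : ∀ s t, HasDerivAt (fun τ => Ψ τ s) (M t * Ψ t s) t)
    (hcoc : ∀ t s r, Ψ t s * Ψ s r = Ψ t r)
    {c : ℝ → Fin n → ℝ} (hc : Continuous c)
    {x : ℝ → Fin n → ℝ} (hx : Continuous x)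
    {a b : ℝ} (hab : a ≤ b)
    (hxode : ∀ t ∈ Set.Ioo a b, HasDerivAt x ((M t).mulVec (x t) + c t) t) :
    ∀ t ∈ Set.Icc a b,
      x t = (Ψ t a).mulVec (x a) +
        (Ψ t a).mulVec (∫ s in a..t, (Ψ a s).mulVec (c s)) := by
  -- continuity helpers
  have hΨc1 : ∀ u : ℝ, Continuous fun s => Ψ u s :=
    fun u => hΨcont.comp (continuous_const.prodMk continuous_id)
  have hΨc2 : ∀ s : ℝ, Continuous fun u => Ψ u s :=
    fun s => hΨcont.comp (continuous_id.prodMk continuous_const)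
  set h₀ : ℝ → Fin n → ℝ := fun s => (Ψ a s).mulVec (c s) with hh₀
  have hh₀cont : Continuous h₀ := (hΨc1 a).matrix_mulVec hc
  set P : ℝ → Fin n → ℝ := fun u => ∫ s in a..u, h₀ s with hP
  have hP' : ∀ u, HasDerivAt P (h₀ u) u := by
    intro u
    exact intervalIntegral.integral_hasDerivAt_right
      (hh₀cont.intervalIntegrable _ _)
      (hh₀cont.stronglyMeasurable.stronglyMeasurableAtFilter)
      hh₀cont.continuousAt
  have hPcont : Continuous P := by
    refine continuous_iff_continuousAt.2 fun u => (hP' u).continuousAt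
  obtain ⟨K, hK⟩ := lip_aux hM a b hab c
  set cl : ℝ → ℝ := fun τ => max a (min τ b) with hcl
  have hclid : ∀ τ ∈ Icc a b, cl τ = τ := by
    intro τ hτ
    simp only [hcl]
    rw [min_eq_left hτ.2, max_eq_right hτ.1]
  set vf : ℝ → (Fin n → ℝ) → (Fin n → ℝ) :=
    fun τ y => (M (cl τ)).mulVec y + c (cl τ) with hvf
  -- Step B: key identity for t ∈ Ioc a b, t₀ ∈ Ioo a t
  have key : ∀ t ∈ Ioc a b, ∀ t₀ ∈ Ioo a t,
      x t = (Ψ t t₀).mulVec (x t₀) + (Ψ t a).mulVec (P t - P t₀) := by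
    intro t ht t₀ ht₀
    set w : ℝ → Fin n → ℝ := fun τ => x t₀ + ∫ s in t₀..τ, (Ψ t₀ s).mulVec (c s) with hw
    set z : ℝ → Fin n → ℝ := fun τ => (Ψ τ t₀).mulVec (w τ) with hz
    have hwInt : Continuous fun s => (Ψ t₀ s).mulVec (c s) := (hΨc1 t₀).matrix_mulVec hc
    have hw' : ∀ τ, HasDerivAt w ((Ψ t₀ τ).mulVec (c τ)) τ := by
      intro τ
      exact (intervalIntegral.integral_hasDerivAt_right
        (hwInt.intervalIntegrable _ _)
        (hwInt.stronglyMeasurable.stronglyMeasurableAtFilter)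
        hwInt.continuousAt).const_add _
    have hz' : ∀ τ, HasDerivAt z ((M τ).mulVec (z τ) + c τ) τ := by
      intro τ
      have h := hasDerivAt_mulVec (hode t₀ τ) (hw' τ)
      have e : (M τ * Ψ τ t₀).mulVec (w τ) +
          (Ψ τ t₀).mulVec ((Ψ t₀ τ).mulVec (c τ)) = (M τ).mulVec (z τ) + c τ := by
        simp [hz, Matrix.mulVec_mulVec, hcoc, hinit, Matrix.one_mulVec]
      rw [← e]
      exact h
    have huniq := ODE_solution_unique_of_mem_Icc_right (v := vf) (s := fun _ => univ)
      (K := K) (f := x) (g := z) (a := t₀) (b := t)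
      (fun τ _ => hK τ)
      (hx.continuousOn)
      (fun τ hτ => by
        have hτIoo : τ ∈ Ioo a b := ⟨ht₀.1.trans_le hτ.1, hτ.2.trans_le ht.2⟩
        have := hxode τ hτIoo
        have hclτ : cl τ = τ := hclid τ ⟨hτIoo.1.le, hτIoo.2.le⟩
        simpa [hvf, hclτ] using this.hasDerivWithinAt)
      (fun τ _ => mem_univ _)
      ((continuous_iff_continuousAt.2 fun τ => (hz' τ).continuousAt).continuousOn)
      (fun τ hτ => by
        have hτIcc : τ ∈ Icc a b := ⟨ht₀.1.le.trans hτ.1, hτ.2.le.trans ht.2⟩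
        have hclτ : cl τ = τ := hclid τ hτIcc
        simpa [hvf, hclτ] using (hz' τ).hasDerivWithinAt)
      (fun τ _ => mem_univ _)
      (by simp [hz, hw, intervalIntegral.integral_same, hinit, Matrix.one_mulVec])
    have hxt : x t = z t := huniq ⟨ht₀.2.le, le_refl t⟩
    -- now rewrite z t
    rw [hxt]
    simp only [hz, hw]
    rw [Matrix.mulVec_add]
    congr 1
    have e1 : (∫ s in t₀..t, (Ψ t₀ s).mulVec (c s))
        = (mulVecCLM (Ψ t₀ a)) (∫ s in t₀..t, h₀ s) := by
      rw [← ContinuousLinearMap.intervalIntegral_comp_comm _ (hh₀cont.intervalIntegrable _ _)]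
      refine intervalIntegral.integral_congr fun s _ => ?_
      simp [hh₀, Matrix.mulVec_mulVec, hcoc]
    rw [e1, mulVecCLM_apply, Matrix.mulVec_mulVec, hcoc]
    rw [← intervalIntegral.integral_interval_sub_left (hh₀cont.intervalIntegrable _ _)
      (hh₀cont.intervalIntegrable _ _)]
  -- Step C: limit t₀ → a⁺
  intro t ht
  rcases eq_or_lt_of_le ht.1 with rfl | hat
  · simp [hinit, Matrix.one_mulVec, intervalIntegral.integral_same]
  · set G : ℝ → Fin n → ℝ :=
      fun u => (Ψ t u).mulVec (x u) + (Ψ t a).mulVec (P t - P u) with hG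
    have hGcont : Continuous G := by
      refine Continuous.add ?_ ?_
      · exact ((hΨc1 t).matrix_mulVec hx)
      · exact continuous_const.matrix_mulVec (continuous_const.sub hPcont)
    have hGeq : ∀ u ∈ Ioo a t, G u = x t := by
      intro u hu
      exact (key t ⟨hat, ht.2⟩ u hu).symm
    have h1 : Filter.Tendsto G (nhdsWithin a (Ioi a)) (nhds (G a)) :=
      (hGcont.continuousAt).continuousWithinAt
    have h2 : Filter.Tendsto G (nhdsWithin a (Ioi a)) (nhds (x t)) := by
      refine Filter.Tendsto.congr' ?_ tendsto_const_nhds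
      filter_upwards [Ioo_mem_nhdsGT_of_mem ⟨le_refl a, hat⟩] with u hu
      exact (hGeq u hu).symm
    have hGa : G a = x t := tendsto_nhds_unique h1 h2
    rw [← hGa]
    simp [hG, hP, intervalIntegral.integral_same]

/-- `fun M => M.mulVec v` as a continuous linear map in the matrix argument. -/
noncomputable def mulVecRightCLM {n p : ℕ} (v : Fin p → ℝ) :
    Matrix (Fin n) (Fin p) ℝ →L[ℝ] (Fin n → ℝ) :=
  LinearMap.toContinuousLinearMap
    { toFun := fun M => M.mulVec v
      map_add' := fun M N => Matrix.add_mulVec M N v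
      map_smul' := fun r M => Matrix.smul_mulVec r M v }

@[simp] lemma mulVecRightCLM_apply {n p : ℕ} (v : Fin p → ℝ) (M : Matrix (Fin n) (Fin p) ℝ) :
    mulVecRightCLM v M = M.mulVec v := rfl

lemma per_iter {α : Type*} (f : ℝ → α) (T : ℝ) (hf : ∀ t, f (t + T) = f t) (j : ℕ) :
    ∀ t, f (t + j * T) = f t := by
  induction j with
  | zero => simp
  | succ j ih =>
    intro t
    have : t + (j + 1 : ℕ) * T = (t + j * T) + T := by push_cast; ring
    rw [this, hf, ih]

lemma transition_shift {n : ℕ} {M : ℝ → Matrix (Fin n) (Fin n) ℝ} (hM : Continuous M)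
    {Ψ : ℝ → ℝ → Matrix (Fin n) (Fin n) ℝ}
    (hΨcont : Continuous fun p : ℝ × ℝ => Ψ p.1 p.2)
    (hinit : ∀ s, Ψ s s = 1)
    (hode : ∀ s t, HasDerivAt (fun τ => Ψ τ s) (M t * Ψ t s) t)
    (hcoc : ∀ t s r, Ψ t s * Ψ s r = Ψ t r)
    (cc : ℝ) (hper : ∀ t, M (t + cc) = M t) :
    ∀ s t : ℝ, s ≤ t → Ψ (t + cc) (s + cc) = Ψ t s := by
  intro s t hst
  have hv : ∀ v : Fin n → ℝ, (Ψ (t + cc) (s + cc)).mulVec v = (Ψ t s).mulVec v := by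
    intro v
    set x : ℝ → Fin n → ℝ := fun τ => (Ψ (τ + cc) (s + cc)).mulVec v with hx
    have hxcont : Continuous x := by
      exact (hΨcont.comp (((continuous_id.add continuous_const)).prodMk
        continuous_const)).matrix_mulVec continuous_const
    have hxode : ∀ τ ∈ Set.Ioo s t, HasDerivAt x ((M τ).mulVec (x τ) + (fun _ => 0) τ) τ := by
      intro τ _
      have h3 : HasDerivAt (fun τ : ℝ => τ + cc) 1 τ := (hasDerivAt_id τ).add_const cc
      have h1 : HasDerivAt (fun τ : ℝ => Ψ (τ + cc) (s + cc))
          (M (τ + cc) * Ψ (τ + cc) (s + cc)) τ := by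
        have h := (hode (s + cc) (τ + cc)).scomp τ h3
        rw [one_smul] at h
        exact h
      have h2 := hasDerivAt_mulVec h1 (hasDerivAt_const τ v)
      have e : (M (τ + cc) * Ψ (τ + cc) (s + cc)).mulVec v + (Ψ (τ + cc) (s + cc)).mulVec 0
          = (M τ).mulVec (x τ) + (fun _ : ℝ => (0 : Fin n → ℝ)) τ := by
        simp [hx, hper, Matrix.mulVec_mulVec]
      rw [← e]
      exact h2
    have := linODE_rep hM hΨcont hinit hode hcoc (c := fun _ => 0) continuous_const hxcont
      hst hxode t ⟨hst, le_refl t⟩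
    simpa [hx, hinit, Matrix.one_mulVec, Matrix.mulVec_zero,
      intervalIntegral.integral_zero] using this
  ext i j
  have := congrFun (hv (Pi.single j 1)) i
  simpa [Matrix.mulVec_single] using this



/-- for the `T`-periodic system `ẋ = A(t)x + B(t)u(t)` with act-and-wait delayed
feedback `u(t) = −g(t)F(x(t) − x(t−T))`, the state at even multiples of `T` satisfies
`x(2(k+1)T) = Λ x(2kT)` with
`Λ = Υ(T,0)Φ(T,0) + ∫_T^{2T} Υ(2T,s)B(s)FΦ(s−T,0) ds`. -/
theorem stmt4 {n m : ℕ} (T : ℝ) (hT : 0 < T)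
    (A : ℝ → Matrix (Fin n) (Fin n) ℝ) (hAcont : Continuous A) (hAper : ∀ t, A (t + T) = A t)
    (B : ℝ → Matrix (Fin n) (Fin m) ℝ) (hBcont : Continuous B) (hBper : ∀ t, B (t + T) = B t)
    (F : Matrix (Fin m) (Fin n) ℝ)
    (g : ℝ → ℝ)
    (hg0 : ∀ (k : ℕ) t, (2 * k * T) ≤ t → t < (2 * k + 1) * T → g t = 0)
    (hg1 : ∀ (k : ℕ) t, ((2 * k + 1) * T) ≤ t → t < (2 * (k + 1)) * T → g t = 1)
    -- state-transition matrix of the uncontrolled system ẋ = A(t)x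
    (Φ : ℝ → ℝ → Matrix (Fin n) (Fin n) ℝ)
    (hΦcont : Continuous fun p : ℝ × ℝ => Φ p.1 p.2)
    (hΦinit : ∀ s, Φ s s = 1)
    (hΦode : ∀ s t, HasDerivAt (fun τ => Φ τ s) (A t * Φ t s) t)
    (hΦcocycle : ∀ t s r, Φ t s * Φ s r = Φ t r)
    -- state-transition matrix of ẋ = (A(t) − B(t)F)x
    (Υ : ℝ → ℝ → Matrix (Fin n) (Fin n) ℝ)
    (hΥcont : Continuous fun p : ℝ × ℝ => Υ p.1 p.2)
    (hΥinit : ∀ s, Υ s s = 1)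
    (hΥode : ∀ s t, HasDerivAt (fun τ => Υ τ s) ((A t - B t * F) * Υ t s) t)
    (hΥcocycle : ∀ t s r, Υ t s * Υ s r = Υ t r)
    -- the closed-loop state: continuous, and solves the closed-loop ODE away from the
    -- switching instants kT
    (x : ℝ → (Fin n → ℝ)) (hxcont : Continuous x)
    (hxode : ∀ t : ℝ, 0 < t → (∀ k : ℕ, t ≠ k * T) →
      HasDerivAt x
        ((A t).mulVec (x t) - g t • (B t * F).mulVec (x t - x (t - T))) t) :
    ∀ k : ℕ,
      x (2 * (k + 1) * T) =
        (Υ T 0 * Φ T 0 +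
          ∫ s in T..(2 * T), Υ (2 * T) s * B s * F * Φ (s - T) 0).mulVec
          (x (2 * k * T)) := by
  intro k
  set a : ℝ := 2 * (k : ℝ) * T with ha
  set c₁ : ℝ := (2 * (k : ℝ) + 1) * T with hc₁
  set d : ℝ := 2 * ((k : ℝ) + 1) * T with hd
  set v : Fin n → ℝ := x a with hv
  have hk0 : (0:ℝ) ≤ (k:ℝ) := Nat.cast_nonneg k
  have hA0 : (0:ℝ) ≤ a := by rw [ha]; positivity
  have hac : a < c₁ := by rw [ha, hc₁]; nlinarith
  have hcd : c₁ < d := by rw [hc₁, hd]; nlinarith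
  have hc₁a : c₁ = T + a := by rw [hc₁, ha]; ring
  have hda : d = 2 * T + a := by rw [hd, ha]; ring
  -- periodicity with period `a`
  have hperAa : ∀ t, A (t + a) = A t := by
    intro t
    have h := per_iter A T hAper (2 * k) t
    have e : t + a = t + ((2 * k : ℕ) : ℝ) * T := by rw [ha]; push_cast; ring
    rw [e, h]
  have hperBa : ∀ t, B (t + a) = B t := by
    intro t
    have h := per_iter B T hBper (2 * k) t
    have e : t + a = t + ((2 * k : ℕ) : ℝ) * T := by rw [ha]; push_cast; ring
    rw [e, h]
  have hM₂cont : Continuous fun t => A t - B t * F :=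
    hAcont.sub (hBcont.matrix_mul continuous_const)
  have hperM₂T : ∀ t, A (t + T) - B (t + T) * F = A t - B t * F := by
    intro t; rw [hAper, hBper]
  have hperM₂a : ∀ t, A (t + a) - B (t + a) * F = A t - B t * F := by
    intro t; rw [hperAa, hperBa]
  have shiftΦa : ∀ s t : ℝ, s ≤ t → Φ (t + a) (s + a) = Φ t s :=
    transition_shift hAcont hΦcont hΦinit hΦode hΦcocycle a hperAa
  have shiftΥa : ∀ s t : ℝ, s ≤ t → Υ (t + a) (s + a) = Υ t s :=
    transition_shift (M := fun t => A t - B t * F) hM₂cont hΥcont hΥinit hΥode hΥcocycle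
      a hperM₂a
  have shiftΥT : ∀ s t : ℝ, s ≤ t → Υ (t + T) (s + T) = Υ t s :=
    transition_shift (M := fun t => A t - B t * F) hM₂cont hΥcont hΥinit hΥode hΥcocycle
      T hperM₂T
  -- Stage 1
  have stage1 : ∀ t ∈ Set.Icc a c₁, x t = (Φ t a).mulVec v := by
    have hode1 : ∀ t ∈ Set.Ioo a c₁,
        HasDerivAt x ((A t).mulVec (x t) + (fun _ : ℝ => (0 : Fin n → ℝ)) t) t := by
      intro t ht
      have htpos : 0 < t := lt_of_le_of_lt hA0 ht.1
      have hne : ∀ j : ℕ, t ≠ j * T := by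
        intro j hj
        rw [hj] at ht
        have h2 : (2 * (k:ℝ)) < j := (mul_lt_mul_iff_of_pos_right hT).1 (by rw [ha] at ht; exact ht.1)
        have h3 : 2 * k < j := by exact_mod_cast h2
        have h4 : (2 * (k:ℝ) + 1) ≤ j := by exact_mod_cast h3
        have h5 : (2 * (k:ℝ) + 1) * T ≤ (j:ℝ) * T := mul_le_mul_of_nonneg_right h4 hT.le
        rw [hc₁] at ht
        exact absurd ht.2 (not_lt.2 h5)
      have hg : g t = 0 := by
        refine hg0 k t ?_ ?_
        · rw [← ha]; exact ht.1.le
        · rw [← hc₁]; exact ht.2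
      have h := hxode t htpos hne
      rw [hg] at h
      simpa using h
    intro t ht
    have h := linODE_rep hAcont hΦcont hΦinit hΦode hΦcocycle
      (c := fun _ => (0 : Fin n → ℝ)) continuous_const hxcont hac.le hode1 t ht
    simpa [Matrix.mulVec_zero, hv] using h
  -- Stage 2
  have hcf : Continuous fun s : ℝ => (B s * F).mulVec (x (s - T)) :=
    (hBcont.matrix_mul continuous_const).matrix_mulVec
      (hxcont.comp (continuous_id.sub continuous_const))
  have hode2 : ∀ t ∈ Set.Ioo c₁ d,
      HasDerivAt x ((A t - B t * F).mulVec (x t)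
        + (fun s : ℝ => (B s * F).mulVec (x (s - T))) t) t := by
    intro t ht
    have htpos : 0 < t := lt_trans (lt_of_le_of_lt hA0 hac) ht.1
    have hne : ∀ j : ℕ, t ≠ j * T := by
      intro j hj
      rw [hj] at ht
      have h2 : (2 * (k:ℝ) + 1) < j := by
        have := ht.1; rw [hc₁] at this
        exact (mul_lt_mul_iff_of_pos_right hT).1 this
      have h2' : (j:ℝ) < 2 * ((k:ℝ) + 1) := by
        have := ht.2; rw [hd] at this
        exact (mul_lt_mul_iff_of_pos_right hT).1 this
      have h3 : 2 * k + 1 < j := by exact_mod_cast h2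
      have h4 : j < 2 * (k + 1) := by exact_mod_cast h2'
      omega
    have hg : g t = 1 := by
      refine hg1 k t ?_ ?_
      · rw [← hc₁]; exact ht.1.le
      · rw [← hd]; exact ht.2
    have h := hxode t htpos hne
    rw [hg] at h
    have e : (A t).mulVec (x t) - (1:ℝ) • (B t * F).mulVec (x t - x (t - T))
        = (A t - B t * F).mulVec (x t) + (B t * F).mulVec (x (t - T)) := by
      rw [one_smul, Matrix.sub_mulVec, Matrix.mulVec_sub]
      abel
    rw [e] at h
    exact h
  have stage2 := linODE_rep (M := fun t => A t - B t * F) hM₂cont hΥcont hΥinit hΥode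
    hΥcocycle (c := fun s : ℝ => (B s * F).mulVec (x (s - T))) hcf hxcont hcd.le hode2
    d ⟨hcd.le, le_refl d⟩
  -- rewrite the pieces
  have hxc₁ : x c₁ = (Φ c₁ a).mulVec v := stage1 c₁ ⟨hac.le, le_refl c₁⟩
  have eΦ : Φ c₁ a = Φ T 0 := by
    have h := shiftΦa 0 T hT.le
    rw [zero_add, ← hc₁a] at h
    exact h
  have eΥ : Υ d c₁ = Υ T 0 := by
    have h1 := shiftΥa T (2 * T) (by linarith)
    rw [← hda, ← hc₁a] at h1
    have h2 := shiftΥT 0 T hT.le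
    rw [zero_add] at h2
    calc Υ d c₁ = Υ (2 * T) T := h1
      _ = Υ T 0 := by rw [show (2:ℝ) * T = T + T by ring]; exact h2
  have hS1 : (Υ d c₁).mulVec (x c₁) = (Υ T 0 * Φ T 0).mulVec v := by
    rw [hxc₁, Matrix.mulVec_mulVec, eΦ, eΥ]
  -- integral part
  have hΥc1 : Continuous fun s => Υ c₁ s :=
    hΥcont.comp (continuous_const.prodMk continuous_id)
  have hIcont : Continuous fun s : ℝ => (Υ c₁ s).mulVec ((B s * F).mulVec (x (s - T))) :=
    hΥc1.matrix_mulVec hcf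
  have e3 : (Υ d c₁).mulVec (∫ s in c₁..d, (Υ c₁ s).mulVec ((B s * F).mulVec (x (s - T))))
      = ∫ s in c₁..d, (Υ d c₁).mulVec ((Υ c₁ s).mulVec ((B s * F).mulVec (x (s - T)))) := by
    have h := (ContinuousLinearMap.intervalIntegral_comp_comm (μ := MeasureTheory.volume)
      (mulVecCLM (Υ d c₁)) (hIcont.intervalIntegrable c₁ d)).symm
    simpa [mulVecCLM_apply] using h
  have e4 : (∫ s in c₁..d, (Υ d c₁).mulVec ((Υ c₁ s).mulVec ((B s * F).mulVec (x (s - T)))))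
      = ∫ s in c₁..d, (Υ d s * B s * F * Φ (s - T) a).mulVec v := by
    refine intervalIntegral.integral_congr fun s hs => ?_
    rw [Set.uIcc_of_le hcd.le] at hs
    have hx' : x (s - T) = (Φ (s - T) a).mulVec v := by
      refine stage1 (s - T) ⟨?_, ?_⟩
      · have := hs.1; rw [hc₁a] at this; linarith
      · have h1 := hs.2; rw [hda] at h1; rw [hc₁a]; linarith
    rw [hx']
    simp only [Matrix.mulVec_mulVec]
    simp only [Matrix.mul_assoc]
    rw [← hΥcocycle d c₁ s, Matrix.mul_assoc]
  have e5 : (∫ s in c₁..d, (Υ d s * B s * F * Φ (s - T) a).mulVec v)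
      = ∫ s in T..(2 * T), (Υ d (s + a) * B (s + a) * F * Φ (s + a - T) a).mulVec v := by
    have h := intervalIntegral.integral_comp_add_right (a := T) (b := 2 * T)
      (fun s => (Υ d s * B s * F * Φ (s - T) a).mulVec v) a
    rw [show T + a = c₁ from hc₁a.symm, show 2 * T + a = d from hda.symm] at h
    exact h.symm
  have e6 : (∫ s in T..(2 * T), (Υ d (s + a) * B (s + a) * F * Φ (s + a - T) a).mulVec v)
      = ∫ s in T..(2 * T), (Υ (2 * T) s * B s * F * Φ (s - T) 0).mulVec v := by
    refine intervalIntegral.integral_congr fun s hs => ?_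
    rw [Set.uIcc_of_le (by linarith : T ≤ 2 * T)] at hs
    have h1 : Υ d (s + a) = Υ (2 * T) s := by
      have := shiftΥa s (2 * T) hs.2
      rw [← hda] at this
      exact this
    have h2 : B (s + a) = B s := hperBa s
    have h3 : Φ (s + a - T) a = Φ (s - T) 0 := by
      have := shiftΦa 0 (s - T) (by linarith [hs.1, hT.le])
      rw [zero_add] at this
      rw [show s + a - T = s - T + a by ring]
      exact this
    rw [h1, h2, h3]
  have e7 : (∫ s in T..(2 * T), (Υ (2 * T) s * B s * F * Φ (s - T) 0).mulVec v)
      = (∫ s in T..(2 * T), Υ (2 * T) s * B s * F * Φ (s - T) 0).mulVec v := by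
    have hmc : Continuous fun s : ℝ => Υ (2 * T) s * B s * F * Φ (s - T) 0 := by
      refine Continuous.matrix_mul ?_ ?_
      · exact ((hΥcont.comp (continuous_const.prodMk continuous_id)).matrix_mul
          hBcont).matrix_mul continuous_const
      · exact hΦcont.comp ((continuous_id.sub continuous_const).prodMk continuous_const)
    have h := ContinuousLinearMap.intervalIntegral_comp_comm (μ := MeasureTheory.volume)
      (mulVecRightCLM v) (hmc.intervalIntegrable T (2 * T))
    exact h
  calc x d = (Υ d c₁).mulVec (x c₁)
        + (Υ d c₁).mulVec (∫ s in c₁..d, (Υ c₁ s).mulVec ((B s * F).mulVec (x (s - T)))) :=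
      stage2
    _ = (Υ T 0 * Φ T 0).mulVec v
        + (∫ s in T..(2 * T), Υ (2 * T) s * B s * F * Φ (s - T) 0).mulVec v := by
      rw [hS1, e3, e4, e5, e6, e7]
    _ = (Υ T 0 * Φ T 0
        + ∫ s in T..(2 * T), Υ (2 * T) s * B s * F * Φ (s - T) 0).mulVec v := by
      rw [Matrix.add_mulVec]
end

section
/- If x*(t) is a T-periodic solution of the uncontrolled T-periodic system ẋ = A(t)x with x*(0) ≠ 0, then the monodromy matrix Λ of the act-and-wait closed-loop system satisfies Λ x*(0) = x*(0); that is, 1 is an eigenvalue of Λ with eigenvector x*(0). -/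
attribute [local instance] Matrix.normedAddCommGroup Matrix.normedSpace

noncomputable def mvCLM (p q : ℕ) :
    Matrix (Fin p) (Fin q) ℝ →L[ℝ] (Fin q → ℝ) →L[ℝ] (Fin p → ℝ) :=
  LinearMap.toContinuousLinearMap
    ((LinearMap.toContinuousLinearMap.toLinearMap).comp Matrix.toLin'.toLinearMap)

@[simp] lemma mvCLM_apply {p q : ℕ} (M : Matrix (Fin p) (Fin q) ℝ) (x : Fin q → ℝ) :
    mvCLM p q M x = M.mulVec x := by
  simp [mvCLM, Matrix.toLin'_apply]

lemma HasDerivAt.mulVec' {p q : ℕ} {f : ℝ → Matrix (Fin p) (Fin q) ℝ} {g : ℝ → Fin q → ℝ}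
    {f' : Matrix (Fin p) (Fin q) ℝ} {g' : Fin q → ℝ} {t : ℝ}
    (hf : HasDerivAt f f' t) (hg : HasDerivAt g g' t) :
    HasDerivAt (fun τ => (f τ).mulVec (g τ)) (f'.mulVec (g t) + (f t).mulVec g') t := by
  have h := ((mvCLM p q).hasFDerivAt.comp_hasDerivAt t hf).clm_apply hg
  exact h

lemma ode_zero {n : ℕ} {a b : ℝ} (hab : a ≤ b) (M : ℝ → Matrix (Fin n) (Fin n) ℝ)
    (hM : Continuous M) (h : ℝ → Fin n → ℝ)
    (hderiv : ∀ t, HasDerivAt h ((M t).mulVec (h t)) t) (ha : h a = 0) : h b = 0 := by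
  have hg : Continuous fun t => ‖mvCLM n n (M t)‖ :=
    (((mvCLM n n).continuous.comp hM)).norm
  obtain ⟨t₀, -, ht₀⟩ := isCompact_Icc.exists_isMaxOn ⟨a, Set.left_mem_Icc.2 hab⟩
    hg.continuousOn
  set K := ‖mvCLM n n (M t₀)‖ with hK
  have hcont : ContinuousOn h (Set.Icc a b) :=
    (fun t _ => (hderiv t).continuousAt.continuousWithinAt)
  have key := norm_le_gronwallBound_of_norm_deriv_right_le (δ := 0) (K := K) (ε := 0)
    hcont (fun x _ => (hderiv x).hasDerivWithinAt) (by simp [ha])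
    (fun x hx => by
      have h1 : ‖(M x).mulVec (h x)‖ ≤ ‖mvCLM n n (M x)‖ * ‖h x‖ := by
        simpa using (mvCLM n n (M x)).le_opNorm (h x)
      have h2 : ‖mvCLM n n (M x)‖ ≤ K := ht₀ (Set.mem_Icc_of_Ico hx)
      calc ‖(M x).mulVec (h x)‖ ≤ ‖mvCLM n n (M x)‖ * ‖h x‖ := h1
        _ ≤ K * ‖h x‖ + 0 := by
            simpa using mul_le_mul_of_nonneg_right h2 (norm_nonneg _) )
  have := key b (Set.right_mem_Icc.2 hab)
  rw [gronwallBound_ε0] at this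
  simpa using this

/-- if `x*` is a `T`-periodic solution of the uncontrolled system `ẋ = A(t)x`
with `x*(0) ≠ 0`, then the act-and-wait monodromy matrix
`Λ = Υ(T,0)Φ(T,0) + ∫_T^{2T} Υ(2T,s)B(s)FΦ(s−T,0) ds` satisfies `Λ x*(0) = x*(0)`,
i.e. `1` is an eigenvalue of `Λ` with eigenvector `x*(0)`. -/
theorem stmt5 {n m : ℕ} (T : ℝ) (hT : 0 < T)
    (A : ℝ → Matrix (Fin n) (Fin n) ℝ) (hAcont : Continuous A) (hAper : ∀ t, A (t + T) = A t)
    (B : ℝ → Matrix (Fin n) (Fin m) ℝ) (hBcont : Continuous B) (hBper : ∀ t, B (t + T) = B t)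
    (F : Matrix (Fin m) (Fin n) ℝ)
    -- state-transition matrix of ẋ = A(t)x
    (Φ : ℝ → ℝ → Matrix (Fin n) (Fin n) ℝ)
    (hΦcont : Continuous fun p : ℝ × ℝ => Φ p.1 p.2)
    (hΦinit : ∀ s, Φ s s = 1)
    (hΦode : ∀ s t, HasDerivAt (fun τ => Φ τ s) (A t * Φ t s) t)
    (hΦcocycle : ∀ t s r, Φ t s * Φ s r = Φ t r)
    -- state-transition matrix of ẋ = (A(t) − B(t)F)x
    (Υ : ℝ → ℝ → Matrix (Fin n) (Fin n) ℝ)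
    (hΥcont : Continuous fun p : ℝ × ℝ => Υ p.1 p.2)
    (hΥinit : ∀ s, Υ s s = 1)
    (hΥode : ∀ s t, HasDerivAt (fun τ => Υ τ s) ((A t - B t * F) * Υ t s) t)
    (hΥcocycle : ∀ t s r, Υ t s * Υ s r = Υ t r)
    -- x* is a T-periodic solution of the uncontrolled system, propagated by Φ
    (xs : ℝ → (Fin n → ℝ))
    (hxsode : ∀ t, HasDerivAt xs ((A t).mulVec (xs t)) t)
    (hxsper : ∀ t, xs (t + T) = xs t)
    (hxsΦ : ∀ t s, xs t = (Φ t s).mulVec (xs s))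
    (hxs0 : xs 0 ≠ 0) :
    (Υ T 0 * Φ T 0 +
        ∫ s in T..(2 * T), Υ (2 * T) s * B s * F * Φ (s - T) 0).mulVec (xs 0) =
      xs 0 := by
  have hT2 : T ≤ 2 * T := by linarith
  set M : ℝ → Matrix (Fin n) (Fin n) ℝ := fun t => A t - B t * F with hM
  have hMcont : Continuous M := hAcont.sub (hBcont.matrix_mul continuous_const)
  have hMper : ∀ t, M (t + T) = M t := fun t => by simp [hM, hAper, hBper]
  have hxscont : Continuous xs :=
    continuous_iff_continuousAt.2 fun t => (hxsode t).continuousAt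
  -- basic periodicity facts
  have hxsT : xs T = xs 0 := by simpa using hxsper 0
  have hxs2T : xs (2 * T) = xs 0 := by
    rw [two_mul]; rw [hxsper T, hxsT]
  -- continuity helpers
  have hΥ2 : ∀ r : ℝ, Continuous fun s => Υ r s :=
    fun r => hΥcont.comp (continuous_const.prodMk continuous_id)
  -- the inhomogeneous source term
  set w : ℝ → Fin n → ℝ := fun s => (Υ T s * B s * F).mulVec (xs s) with hw
  have hwcont : Continuous w :=
    (((hΥ2 T).matrix_mul hBcont).matrix_mul continuous_const).matrix_mulVec hxscont
  set c : ℝ → Fin n → ℝ := fun t => xs T + ∫ s in T..t, w s with hc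
  have hcderiv : ∀ t, HasDerivAt c (w t) t := fun t =>
    ((hwcont.integral_hasStrictDerivAt T t).hasDerivAt).const_add _
  set v : ℝ → Fin n → ℝ := fun t => (Υ t T).mulVec (c t) with hv
  have hvderiv : ∀ t, HasDerivAt v
      ((M t * Υ t T).mulVec (c t) + (Υ t T).mulVec (w t)) t :=
    fun t => (hΥode T t).mulVec' (hcderiv t)
  -- Step E : Υ (T+T) T *ᵥ xs 0 = Υ T 0 *ᵥ xs 0
  have hshift : (Υ (T + T) T).mulVec (xs 0) = (Υ T 0).mulVec (xs 0) := by
    have hz : (fun t => (Υ (t + T) T).mulVec (xs 0) - (Υ t 0).mulVec (xs 0)) T = 0 := by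
      refine ode_zero (le_of_lt hT) M hMcont
        (fun t => (Υ (t + T) T).mulVec (xs 0) - (Υ t 0).mulVec (xs 0))
        (fun t => ?_) (by simp [hΥinit])
      have h1 : HasDerivAt (fun t => Υ (t + T) T) (M (t + T) * Υ (t + T) T) t := by
        have := (hΥode T (t + T)).scomp t ((hasDerivAt_id t).add_const T)
        simp at this
        exact this
      have h2 := (h1.mulVec' (hasDerivAt_const t (xs 0))).sub
        ((hΥode 0 t).mulVec' (hasDerivAt_const t (xs 0)))
      rw [hMper] at h2
      simp [Matrix.mulVec_sub, ← Matrix.mulVec_mulVec] at h2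
      rw [Matrix.mulVec_sub]
      exact h2
    have hz' : (Υ (T + T) T).mulVec (xs 0) - (Υ T 0).mulVec (xs 0) = 0 := hz
    exact sub_eq_zero.1 hz'
  -- Step F : v (2T) = xs (2T)
  have hveq : v (2 * T) = xs (2 * T) := by
    have hz : (fun t => v t - xs t) (2 * T) = 0 := by
      refine ode_zero hT2 M hMcont (fun t => v t - xs t) (fun t => ?_) ?_
      · have h2 := (hvderiv t).sub (hxsode t)
        have e1 : (Υ t T).mulVec (w t) = (B t * F).mulVec (xs t) := by
          rw [hw]
          simp only [Matrix.mulVec_mulVec]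
          rw [show Υ t T * (Υ T t * B t * F) = (Υ t T * Υ T t) * B t * F by
              simp [Matrix.mul_assoc], hΥcocycle, hΥinit, Matrix.one_mul]
        have e2 : (M t * Υ t T).mulVec (c t) + (B t * F).mulVec (xs t)
            - (A t).mulVec (xs t) = (M t).mulVec (v t - xs t) := by
          simp only [hv, hc, hM, Matrix.mulVec_sub, Matrix.sub_mulVec,
            ← Matrix.mulVec_mulVec]
          abel
        rw [e1] at h2
        rw [e2] at h2
        exact h2
      · simp [hv, hc, intervalIntegral.integral_same, hΥinit, Matrix.one_mulVec]
    have hz' : v (2 * T) - xs (2 * T) = 0 := hz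
    exact sub_eq_zero.1 hz'
  -- integrand continuity / integrability
  have hGcont : Continuous fun s => Υ (2 * T) s * B s * F * Φ (s - T) 0 :=
    (((hΥ2 (2 * T)).matrix_mul hBcont).matrix_mul continuous_const).matrix_mul
      (hΦcont.comp ((continuous_id.sub continuous_const).prodMk continuous_const))
  have hwint : IntervalIntegrable w MeasureTheory.volume T (2 * T) :=
    hwcont.intervalIntegrable _ _
  -- move mulVec inside the integral
  have hint1 : (∫ s in T..(2 * T), Υ (2 * T) s * B s * F * Φ (s - T) 0).mulVec (xs 0)
      = ∫ s in T..(2 * T), (Υ (2 * T) s * B s * F * Φ (s - T) 0).mulVec (xs 0) := by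
    have := ((mvCLM n n).flip (xs 0)).intervalIntegral_comp_comm
      (hGcont.intervalIntegrable (μ := MeasureTheory.volume) T (2 * T))
    exact this.symm
  have hΦs : ∀ s : ℝ, (Φ (s - T) 0).mulVec (xs 0) = xs s := fun s => by
    rw [← hxsΦ (s - T) 0]
    have h := hxsper (s - T)
    rw [sub_add_cancel] at h
    exact h.symm
  have hint2 : ∀ s : ℝ, (Υ (2 * T) s * B s * F * Φ (s - T) 0).mulVec (xs 0)
      = (Υ (2 * T) T).mulVec (w s) := fun s => by
    show _ = (Υ (2 * T) T).mulVec ((Υ T s * B s * F).mulVec (xs s))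
    rw [← Matrix.mulVec_mulVec, hΦs s, Matrix.mulVec_mulVec]
    congr 1
    rw [show Υ (2 * T) T * (Υ T s * B s * F) = (Υ (2 * T) T * Υ T s) * B s * F by
      simp [Matrix.mul_assoc], hΥcocycle]
  have hint3 : ∫ s in T..(2 * T), (Υ (2 * T) T).mulVec (w s)
      = (Υ (2 * T) T).mulVec (∫ s in T..(2 * T), w s) := by
    have := (mvCLM n n (Υ (2 * T) T)).intervalIntegral_comp_comm hwint
    simpa using this
  calc (Υ T 0 * Φ T 0 +
        ∫ s in T..(2 * T), Υ (2 * T) s * B s * F * Φ (s - T) 0).mulVec (xs 0)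
      = (Υ T 0).mulVec ((Φ T 0).mulVec (xs 0))
        + (∫ s in T..(2 * T), Υ (2 * T) s * B s * F * Φ (s - T) 0).mulVec (xs 0) := by
        rw [Matrix.add_mulVec, Matrix.mulVec_mulVec]
    _ = (Υ T 0).mulVec (xs 0)
        + (Υ (2 * T) T).mulVec (∫ s in T..(2 * T), w s) := by
        rw [← hxsΦ T 0, hxsT, hint1, ← hint3]
        congr 1
        exact intervalIntegral.integral_congr fun s _ => hint2 s
    _ = (Υ (2 * T) T).mulVec (xs T) + (Υ (2 * T) T).mulVec (∫ s in T..(2 * T), w s) := by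
        rw [hxsT, ← hshift, two_mul]
    _ = v (2 * T) := by
        show _ = (Υ (2 * T) T).mulVec (xs T + ∫ s in T..(2 * T), w s)
        rw [Matrix.mulVec_add]
    _ = xs 0 := by rw [hveq, hxs2T]
end

section
/- For the 2-dimensional system with A(t) = [[0.5, 0.5], [0, 2π sin(2πt)/(2 − cos(2πt))]], the vector-valued function x*(t) = ( (cos(2πt) − 4π sin(2πt))/(1+16π²) − 2 , 2 − cos(2πt) ) is a 1-periodic solution of ẋ(t) = A(t) x(t). -/
open Real

/-- for `A(t) = [[0.5, 0.5], [0, 2π sin(2πt)/(2 − cos(2πt))]]`, the function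
`x*(t) = ((cos(2πt) − 4π sin(2πt))/(1+16π²) − 2, 2 − cos(2πt))` is a 1-periodic solution
of `ẋ = A(t)x`. -/
theorem stmt16
    (A : ℝ → Matrix (Fin 2) (Fin 2) ℝ)
    (hA : ∀ t, A t =
      !![(0.5 : ℝ), 0.5;
         0, 2 * π * Real.sin (2 * π * t) / (2 - Real.cos (2 * π * t))])
    (xs : ℝ → (Fin 2 → ℝ))
    (hxs : ∀ t, xs t =
      ![(Real.cos (2 * π * t) - 4 * π * Real.sin (2 * π * t)) / (1 + 16 * π ^ 2) - 2,
        2 - Real.cos (2 * π * t)]) :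
    (∀ t, HasDerivAt xs ((A t).mulVec (xs t)) t) ∧ (∀ t, xs (t + 1) = xs t) := by
  have hx : xs = fun t => ![(Real.cos (2 * π * t) - 4 * π * Real.sin (2 * π * t)) / (1 + 16 * π ^ 2) - 2,
        2 - Real.cos (2 * π * t)] := funext hxs
  have hpi : (0:ℝ) < 1 + 16 * π ^ 2 := by positivity
  constructor
  · intro t
    have hne : (2 - Real.cos (2 * π * t)) ≠ 0 := by
      have := Real.cos_le_one (2 * π * t); intro h; linarith
    have hlin : HasDerivAt (fun t : ℝ => 2 * π * t) (2 * π) t := by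
      simpa using (hasDerivAt_id t).const_mul (2 * π)
    have hc : HasDerivAt (fun t : ℝ => Real.cos (2 * π * t))
        (-Real.sin (2 * π * t) * (2 * π)) t :=
      (Real.hasDerivAt_cos (2 * π * t)).comp t hlin
    have hs : HasDerivAt (fun t : ℝ => Real.sin (2 * π * t))
        (Real.cos (2 * π * t) * (2 * π)) t :=
      (Real.hasDerivAt_sin (2 * π * t)).comp t hlin
    have h0 : HasDerivAt (fun t : ℝ =>
        (Real.cos (2 * π * t) - 4 * π * Real.sin (2 * π * t)) / (1 + 16 * π ^ 2) - 2)
        ((-Real.sin (2 * π * t) * (2 * π) - 4 * π * (Real.cos (2 * π * t) * (2 * π))) / (1 + 16 * π ^ 2)) t := by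
      exact ((hc.sub (hs.const_mul (4 * π))).div_const _).sub_const 2
    have h1 : HasDerivAt (fun t : ℝ => 2 - Real.cos (2 * π * t))
        (-(-Real.sin (2 * π * t) * (2 * π))) t := by exact hc.const_sub 2
    have key : HasDerivAt xs
        ![(-Real.sin (2 * π * t) * (2 * π) - 4 * π * (Real.cos (2 * π * t) * (2 * π))) / (1 + 16 * π ^ 2),
          -(-Real.sin (2 * π * t) * (2 * π))] t := by
      rw [hx, hasDerivAt_pi]
      intro i
      fin_cases i
      · simpa using h0
      · simpa using h1
    convert key using 1
    funext i
    fin_cases i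
    · simp [hA, hxs, Matrix.mulVec, dotProduct, Fin.sum_univ_two]
      field_simp
      ring
    · simp [hA, hxs, Matrix.mulVec, dotProduct, Fin.sum_univ_two]
      field_simp
  · intro t
    have harg : 2 * π * (t + 1) = 2 * π * t + 2 * π := by ring
    rw [hxs, hxs, harg, Real.cos_add_two_pi, Real.sin_add_two_pi]
end
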